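/- Let m and n be positive integers with n ≥ m, and let u, v, and w be (possibly empty) words all of whose letters lie in {1, …, m}. Then the concatenated words u·m·v·n·w and u·n·v·m·w (where m and n denote single letters) are Wilf equivalent: for all N, M ∈ ℕ, the number of words of length N and letter sum M avoiding u·m·v·n·w equals the number of words of length N and letter sum M avoiding u·n·v·m·w. -/

import Mathlib

/-- The `n`-th letter (1-indexed) of a word `u`, with the convention that
letters outside the range `{1, …, |u|}` are `0`. -/
def letter (u : List ℕ) (n : ℤ) : ℕ :=
  if 1 ≤ n then u.getD (n - 1).toNat 0 else 0

/-- A word over the positive integers: every letter is positive. -/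
def IsWord (w : List ℕ) : Prop := ∀ x ∈ w, 0 < x

/-- `u` embeds in `w` at (1-indexed) position `i`:
`1 ≤ i ≤ |w| - |u| + 1` and `u_j ≤ w_{i+j-1}` for all `1 ≤ j ≤ |u|`. -/
def EmbedsAt (u w : List ℕ) (i : ℕ) : Prop :=
  1 ≤ i ∧ i + u.length ≤ w.length + 1 ∧
    ∀ j ∈ Finset.Icc 1 u.length, letter u (j : ℤ) ≤ letter w ((i : ℤ) + (j : ℤ) - 1)

instance (u w : List ℕ) : DecidablePred (EmbedsAt u w) := fun i => by
  unfold EmbedsAt; infer_instance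

/-- `η_u(w)`: the number of positions at which `u` embeds in `w`. -/
def eta (u w : List ℕ) : ℕ :=
  ((Finset.Icc 1 (w.length + 1 - u.length)).filter (EmbedsAt u w)).card

/-- Strong Wilf equivalence: for all `n m j`, the number of words of length `n`,
sum `m`, and exactly `j` embeddings of `u` equals that for `v`. -/
def StronglyWilfEquiv (u v : List ℕ) : Prop :=
  ∀ n m j : ℕ,
    {w : List ℕ | IsWord w ∧ w.length = n ∧ w.sum = m ∧ eta u w = j}.ncard =
    {w : List ℕ | IsWord w ∧ w.length = n ∧ w.sum = m ∧ eta v w = j}.ncard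

/-- `w` avoids `u`: there is no position at which `u` embeds in `w`. -/
def Avoids (u w : List ℕ) : Prop := ∀ i : ℕ, ¬ EmbedsAt u w i

/-- Wilf equivalence: for all `n m`, the number of words of length `n` and
sum `m` avoiding `u` equals that for `v`. -/
def WilfEquiv (u v : List ℕ) : Prop :=
  ∀ n m : ℕ,
    {w : List ℕ | IsWord w ∧ w.length = n ∧ w.sum = m ∧ Avoids u w}.ncard =
    {w : List ℕ | IsWord w ∧ w.length = n ∧ w.sum = m ∧ Avoids v w}.ncard

/-- `v` is the rigid shift of `u` at height `h ≥ 1` by the integer `k`. -/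
def IsRigidShift (u v : List ℕ) (h : ℕ) (k : ℤ) : Prop :=
  1 ≤ h ∧ v.length = u.length ∧
  (∀ n : ℤ, h < letter u n → 1 ≤ n + k ∧ n + k ≤ (u.length : ℤ) ∧ h ≤ letter u (n + k)) ∧
  (∀ n : ℤ, 1 ≤ n → n ≤ (v.length : ℤ) →
    letter v n = min h (letter u n) + (letter u (n - k) - h))

/-- Shift equivalence: the smallest equivalence relation relating every word to
its reversal and to each of its rigid shifts. -/
def ShiftEquiv (u v : List ℕ) : Prop :=
  Relation.EqvGen (fun a b => b = a.reverse ∨ ∃ (h : ℕ) (k : ℤ), IsRigidShift a b h k) u v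

namespace WilfAux

/-- 0-indexed embedding predicate. -/
def emb0 (p x : List ℕ) (i : ℕ) : Prop :=
  i + p.length ≤ x.length ∧ ∀ j < p.length, p.getD j 0 ≤ x.getD (i + j) 0

instance (p x : List ℕ) : DecidablePred (emb0 p x) := fun i => by
  unfold emb0; infer_instance

lemma letter_coe (u : List ℕ) (j : ℕ) (hj : 1 ≤ j) : letter u (j : ℤ) = u.getD (j - 1) 0 := by
  unfold letter
  rw [if_pos (by exact_mod_cast hj)]
  congr 1
  omega

lemma letter_coe' (x : List ℕ) (i j : ℕ) (hi : 1 ≤ i) (hj : 1 ≤ j) :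
    letter x ((i : ℤ) + (j : ℤ) - 1) = x.getD (i - 1 + (j - 1)) 0 := by
  have h1 : (i : ℤ) + (j : ℤ) - 1 = ((i + j - 1 : ℕ) : ℤ) := by push_cast; omega
  rw [h1, letter_coe x (i + j - 1) (by omega)]
  congr 1
  omega

lemma embedsAt_iff (p x : List ℕ) (i : ℕ) :
    EmbedsAt p x i ↔ 1 ≤ i ∧ emb0 p x (i - 1) := by
  unfold EmbedsAt emb0
  constructor
  · rintro ⟨h1, h2, h3⟩
    refine ⟨h1, by omega, ?_⟩
    intro j hj
    have := h3 (j + 1) (Finset.mem_Icc.mpr ⟨by omega, by omega⟩)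
    rwa [letter_coe p (j + 1) (by omega), letter_coe' x i (j + 1) h1 (by omega),
      Nat.add_sub_cancel] at this
  · rintro ⟨h1, h2, h3⟩
    refine ⟨h1, by omega, ?_⟩
    intro j hj
    rw [Finset.mem_Icc] at hj
    rw [letter_coe p j hj.1, letter_coe' x i j h1 hj.1]
    exact h3 (j - 1) (by omega)

lemma avoids_iff (p x : List ℕ) : Avoids p x ↔ ∀ i, ¬ emb0 p x i := by
  unfold Avoids
  constructor
  · intro h i hi
    exact h (i + 1) ((embedsAt_iff p x (i + 1)).mpr ⟨by omega, by simpa using hi⟩)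
  · intro h i hi
    rcases (embedsAt_iff p x i).mp hi with ⟨h1, h2⟩
    exact h (i - 1) h2

end WilfAux

namespace Part2
open WilfAux

/-- All functions `Fin N → ℕ` with entries in `[1, M]`. -/
def box (N M : ℕ) : Finset (Fin N → ℕ) := Fintype.piFinset fun _ => Finset.Icc 1 M

/-- Counting finset for words of length `N`, sum `M`, satisfying `P`. -/
noncomputable def cnt (N M : ℕ) (P : List ℕ → Prop) : Finset (Fin N → ℕ) :=
  @Finset.filter _ (fun f => (List.ofFn f).sum = M ∧ P (List.ofFn f))
    (Classical.decPred _) (box N M)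

lemma mem_cnt {N M : ℕ} {P : List ℕ → Prop} {f : Fin N → ℕ} :
    f ∈ cnt N M P ↔ (∀ i, 1 ≤ f i ∧ f i ≤ M) ∧ (List.ofFn f).sum = M ∧ P (List.ofFn f) := by
  unfold cnt box
  simp only [Finset.mem_filter, Fintype.mem_piFinset, Finset.mem_Icc]

lemma ncard_eq_cnt (N M : ℕ) (P : List ℕ → Prop) :
    {w : List ℕ | IsWord w ∧ w.length = N ∧ w.sum = M ∧ P w}.ncard = (cnt N M P).card := by
  have hset : {w : List ℕ | IsWord w ∧ w.length = N ∧ w.sum = M ∧ P w} =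
      List.ofFn '' (↑(cnt N M P) : Set (Fin N → ℕ)) := by
    ext x
    simp only [Set.mem_setOf_eq, Set.mem_image, Finset.mem_coe]
    constructor
    · rintro ⟨hw, hl, hs, hp⟩
      subst hl
      refine ⟨x.get, ?_, List.ofFn_get x⟩
      rw [mem_cnt]
      refine ⟨fun i => ?_, by rw [List.ofFn_get]; exact hs, by rw [List.ofFn_get]; exact hp⟩
      have hmem : x.get i ∈ x := by exact List.get_mem x i
      constructor
      · exact hw _ hmem
      · exact hs ▸ List.single_le_sum (fun y _ => Nat.zero_le y) _ hmem
    · rintro ⟨f, hf, rfl⟩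
      rw [mem_cnt] at hf
      obtain ⟨hb, hs, hp⟩ := hf
      refine ⟨?_, by simp, hs, hp⟩
      intro y hy
      rw [List.mem_ofFn] at hy
      obtain ⟨i, rfl⟩ := hy
      exact (hb i).1
  rw [hset, Set.ncard_image_of_injective _ List.ofFn_injective, Set.ncard_coe_finset]

end Part2

namespace Part3
open WilfAux Part2

variable (N M : ℕ) (p : List ℕ)

noncomputable def base : Finset (Fin N → ℕ) := cnt N M (fun _ => True)

def Tset (f : Fin N → ℕ) : Finset ℕ := (Finset.range N).filter (emb0 p (List.ofFn f))

lemma mem_Tset {f : Fin N → ℕ} {i : ℕ} :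
    i ∈ Tset N p f ↔ i < N ∧ emb0 p (List.ofFn f) i := by
  simp [Tset, Finset.mem_filter]

lemma emb0_lt (hL : 1 ≤ p.length) {x : List ℕ} {i : ℕ} (h : emb0 p x i) : i < x.length := by
  rcases h with ⟨h1, -⟩; omega

lemma avoids_iff_Tset (hL : 1 ≤ p.length) (f : Fin N → ℕ) :
    Avoids p (List.ofFn f) ↔ Tset N p f = ∅ := by
  rw [avoids_iff]
  constructor
  · intro h
    ext i
    simp only [mem_Tset, Finset.notMem_empty, iff_false, not_and]
    exact fun _ => h i
  · intro h i hi
    have hlt : i < N := by have := emb0_lt p hL hi; simpa using this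
    have : i ∈ Tset N p f := (mem_Tset N p).mpr ⟨hlt, hi⟩
    simp [h] at this

lemma subset_Tset_iff (hL : 1 ≤ p.length) (S : Finset ℕ) (f : Fin N → ℕ) :
    S ⊆ Tset N p f ↔ ∀ i ∈ S, emb0 p (List.ofFn f) i := by
  constructor
  · intro h i hi
    exact ((mem_Tset N p).mp (h hi)).2
  · intro h i hi
    have := h i hi
    exact (mem_Tset N p).mpr ⟨by have := emb0_lt p hL this; simpa using this, this⟩

lemma inclusion_exclusion (hL : 1 ≤ p.length) :
    ((cnt N M (Avoids p)).card : ℤ) =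
      ∑ S ∈ (Finset.range N).powerset,
        (-1) ^ S.card * ((cnt N M fun x => ∀ i ∈ S, emb0 p x i).card : ℤ) := by
  classical
  have hfil : cnt N M (Avoids p) = (base N M).filter (fun f => Tset N p f = ∅) := by
    ext f
    simp only [mem_cnt, base, Finset.mem_filter]
    rw [← avoids_iff_Tset N p hL f]
    tauto
  have hTsub : ∀ f : Fin N → ℕ, Tset N p f ⊆ Finset.range N := fun f =>
    Finset.filter_subset _ _
  calc ((cnt N M (Avoids p)).card : ℤ)
      = ∑ f ∈ base N M, if Tset N p f = ∅ then (1 : ℤ) else 0 := by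
        rw [hfil, Finset.card_filter]
        push_cast
        rfl
    _ = ∑ f ∈ base N M, ∑ S ∈ (Tset N p f).powerset, (-1 : ℤ) ^ S.card := by
        refine Finset.sum_congr rfl fun f _ => ?_
        exact (Finset.sum_powerset_neg_one_pow_card).symm
    _ = ∑ f ∈ base N M, ∑ S ∈ (Finset.range N).powerset,
          if S ⊆ Tset N p f then (-1 : ℤ) ^ S.card else 0 := by
        refine Finset.sum_congr rfl fun f _ => ?_
        rw [← Finset.sum_subset (Finset.powerset_mono.mpr (hTsub f))
          (fun S _ hS => if_neg (by simpa [Finset.mem_powerset] using hS))]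
        refine Finset.sum_congr rfl fun S hS => ?_
        rw [if_pos (Finset.mem_powerset.mp hS)]
    _ = ∑ S ∈ (Finset.range N).powerset, ∑ f ∈ base N M,
          if S ⊆ Tset N p f then (-1 : ℤ) ^ S.card else 0 := Finset.sum_comm
    _ = ∑ S ∈ (Finset.range N).powerset,
        (-1) ^ S.card * ((cnt N M fun x => ∀ i ∈ S, emb0 p x i).card : ℤ) := by
        refine Finset.sum_congr rfl fun S _ => ?_
        rw [← Finset.sum_filter, Finset.sum_const]
        have hcard : (base N M).filter (fun f => S ⊆ Tset N p f) =
            cnt N M fun x => ∀ i ∈ S, emb0 p x i := by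
          ext f
          simp only [mem_cnt, base, Finset.mem_filter, subset_Tset_iff N p hL]
          tauto
        rw [hcard]
        push_cast
        ring

end Part3

namespace Part4
open WilfAux Part2

/-- Contribution of a copy of `p` placed at position `i` to position `t`. -/
def cov (p : List ℕ) (i t : ℕ) : ℕ :=
  if i ≤ t ∧ t < i + p.length then p.getD (t - i) 0 else 0

/-- Profile of a set of copies of `p`. -/
def prof (p : List ℕ) (S : Finset ℕ) (t : ℕ) : ℕ :=
  max 1 (S.sup fun i => cov p i t)

lemma one_le_prof (p : List ℕ) (S : Finset ℕ) (t : ℕ) : 1 ≤ prof p S t :=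
  le_max_left _ _

lemma getD_ofFn {N : ℕ} (f : Fin N → ℕ) (t : ℕ) (h : t < N) :
    (List.ofFn f).getD t 0 = f ⟨t, h⟩ := by
  rw [List.getD_eq_getElem _ _ (by simpa using h)]
  simp

lemma prof_le_iff {N : ℕ} (p : List ℕ) (S : Finset ℕ) (x : List ℕ) (hx : x.length = N)
    (hpos : ∀ t, t < N → 1 ≤ x.getD t 0) (hS : ∀ i ∈ S, i + p.length ≤ N) :
    (∀ i ∈ S, emb0 p x i) ↔ ∀ t, t < N → prof p S t ≤ x.getD t 0 := by
  constructor
  · intro h t ht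
    rw [prof, max_le_iff]
    refine ⟨hpos t ht, Finset.sup_le fun i hi => ?_⟩
    rw [cov]
    split_ifs with hc
    · have := (h i hi).2 (t - i) (by omega)
      rwa [show i + (t - i) = t by omega] at this
    · exact Nat.zero_le _
  · intro h i hi
    refine ⟨by rw [hx]; exact hS i hi, fun j hj => ?_⟩
    have h1 : cov p i (i + j) = p.getD j 0 := by
      rw [cov, if_pos ⟨by omega, by omega⟩, Nat.add_sub_cancel_left]
    have h2 : cov p i (i + j) ≤ S.sup fun i' => cov p i' (i + j) :=
      Finset.le_sup (f := fun i' => cov p i' (i + j)) hi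
    have h3 := h (i + j) (by have := hS i hi; omega)
    rw [prof] at h3
    calc p.getD j 0 = cov p i (i + j) := h1.symm
      _ ≤ _ := h2
      _ ≤ max 1 (S.sup fun i' => cov p i' (i + j)) := le_max_right _ _
      _ ≤ x.getD (i + j) 0 := h3

/-- Key bijection: if the profiles of `p` and `q` w.r.t. `S` have equal total sum,
the counts of words dominating them agree. -/
lemma card_cnt_eq (N M : ℕ) (p q : List ℕ) (S : Finset ℕ)
    (hSp : ∀ i ∈ S, i + p.length ≤ N) (hSq : ∀ i ∈ S, i + q.length ≤ N)
    (hsum : ∑ t ∈ Finset.range N, prof p S t = ∑ t ∈ Finset.range N, prof q S t) :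
    (cnt N M fun x => ∀ i ∈ S, emb0 p x i).card =
    (cnt N M fun x => ∀ i ∈ S, emb0 q x i).card := by
  classical
  have hsum' : ∑ t : Fin N, prof p S t = ∑ t : Fin N, prof q S t := by
    rwa [← Fin.sum_univ_eq_sum_range, ← Fin.sum_univ_eq_sum_range] at hsum
  -- membership characterization via profiles
  have hmem : ∀ (r : List ℕ) (hr : ∀ i ∈ S, i + r.length ≤ N) (f : Fin N → ℕ),
      f ∈ (cnt N M fun x => ∀ i ∈ S, emb0 r x i) ↔
        ((∀ i, 1 ≤ f i ∧ f i ≤ M) ∧ (∑ i, f i) = M ∧ ∀ t : Fin N, prof r S t ≤ f t) := by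
    intro r hr f
    rw [mem_cnt]
    have hx : (List.ofFn f).length = N := by simp
    constructor
    · rintro ⟨hb, hs, hp⟩
      refine ⟨hb, by rwa [List.sum_ofFn] at hs, fun t => ?_⟩
      have := (prof_le_iff r S (List.ofFn f) hx
        (fun t ht => by rw [getD_ofFn f t ht]; exact (hb _).1) hr).mp hp t t.isLt
      rwa [getD_ofFn f t.val t.isLt, Fin.eta] at this
    · rintro ⟨hb, hs, hp⟩
      refine ⟨hb, by rwa [List.sum_ofFn], ?_⟩
      refine (prof_le_iff r S (List.ofFn f) hx
        (fun t ht => by rw [getD_ofFn f t ht]; exact (hb _).1) hr).mpr ?_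
      intro t ht
      rw [getD_ofFn f t ht]
      exact hp ⟨t, ht⟩
  -- the bijection
  refine Finset.card_bij' (fun f _ => fun t => f t - prof p S t + prof q S t)
    (fun f _ => fun t => f t - prof q S t + prof p S t) ?_ ?_ ?_ ?_
  · -- maps into target
    intro f hf
    rw [hmem p hSp] at hf
    obtain ⟨hb, hs, hp⟩ := hf
    rw [hmem q hSq]
    have hsum2 : (∑ t : Fin N, (f t - prof p S t + prof q S t)) = M := by
      have h1 : ∀ t : Fin N, prof p S t ≤ f t := hp
      have h2 : (∑ t : Fin N, (f t - prof p S t + prof q S t)) =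
          (∑ t : Fin N, f t) - (∑ t : Fin N, prof p S t) + (∑ t : Fin N, prof q S t) := by
        rw [Finset.sum_add_distrib, Finset.sum_tsub_distrib _ (fun t _ => h1 t)]
      have h3 : (∑ t : Fin N, prof p S t) ≤ ∑ t : Fin N, f t :=
        Finset.sum_le_sum fun t _ => h1 t
      omega
    refine ⟨?_, hsum2, ?_⟩
    · intro t
      refine ⟨by beta_reduce; have := one_le_prof q S (t : ℕ); omega, ?_⟩
      calc f t - prof p S t + prof q S t
          ≤ ∑ t' : Fin N, (f t' - prof p S t' + prof q S t') :=
            Finset.single_le_sum (f := fun t' : Fin N => f t' - prof p S t' + prof q S t')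
              (fun t' _ => Nat.zero_le _) (Finset.mem_univ t)
        _ = M := hsum2
    · intro t
      beta_reduce
      have := one_le_prof q S (t : ℕ)
      omega
  · -- reverse maps into source
    intro f hf
    rw [hmem q hSq] at hf
    obtain ⟨hb, hs, hp⟩ := hf
    rw [hmem p hSp]
    have hsum2 : (∑ t : Fin N, (f t - prof q S t + prof p S t)) = M := by
      have h1 : ∀ t : Fin N, prof q S t ≤ f t := hp
      have h2 : (∑ t : Fin N, (f t - prof q S t + prof p S t)) =
          (∑ t : Fin N, f t) - (∑ t : Fin N, prof q S t) + (∑ t : Fin N, prof p S t) := by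
        rw [Finset.sum_add_distrib, Finset.sum_tsub_distrib _ (fun t _ => h1 t)]
      have h3 : (∑ t : Fin N, prof q S t) ≤ ∑ t : Fin N, f t :=
        Finset.sum_le_sum fun t _ => h1 t
      omega
    refine ⟨?_, hsum2, ?_⟩
    · intro t
      refine ⟨by beta_reduce; have := one_le_prof p S (t : ℕ); omega, ?_⟩
      calc f t - prof q S t + prof p S t
          ≤ ∑ t' : Fin N, (f t' - prof q S t' + prof p S t') :=
            Finset.single_le_sum (f := fun t' : Fin N => f t' - prof q S t' + prof p S t')
              (fun t' _ => Nat.zero_le _) (Finset.mem_univ t)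
        _ = M := hsum2
    · intro t
      beta_reduce
      have := one_le_prof p S (t : ℕ)
      omega
  · -- left inverse
    intro f hf
    rw [hmem p hSp] at hf
    funext t
    beta_reduce
    have h1 : prof p S t ≤ f t := hf.2.2 t
    have h2 := one_le_prof q S t
    omega
  · -- right inverse
    intro f hf
    rw [hmem q hSq] at hf
    funext t
    beta_reduce
    have h1 : prof q S t ≤ f t := hf.2.2 t
    have h2 := one_le_prof p S t
    omega

end Part4

namespace Part5
open WilfAux Part2 Part4

lemma prof_sum_eq (N : ℕ) (p q : List ℕ) (m n α β : ℕ)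
    (hm : 1 ≤ m) (hmn : m ≤ n) (hαβ : α < β) (hβ : β < p.length)
    (hlen : q.length = p.length)
    (hagree : ∀ j, j ≠ α → j ≠ β → p.getD j 0 = q.getD j 0)
    (hpα : p.getD α 0 = m) (hpβ : p.getD β 0 = n)
    (hqα : q.getD α 0 = n) (hqβ : q.getD β 0 = m)
    (hpm : ∀ j, j ≠ β → p.getD j 0 ≤ m) (hqm : ∀ j, j ≠ α → q.getD j 0 ≤ m)
    (S : Finset ℕ) (hS : ∀ i ∈ S, i + p.length ≤ N) :
    ∑ t ∈ Finset.range N, prof p S t = ∑ t ∈ Finset.range N, prof q S t := by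
  classical
  set A : Finset ℕ := S.image (· + α) with hA
  set B : Finset ℕ := S.image (· + β) with hB
  have hn1 : 1 ≤ n := le_trans hm hmn
  -- profile values on the various regions
  have h1 : ∀ t ∈ B, prof p S t = n := by
    intro t ht
    obtain ⟨i, hi, rfl⟩ := Finset.mem_image.mp ht
    have hup : (S.sup fun i' => cov p i' (i + β)) ≤ n := by
      refine Finset.sup_le fun i' _ => ?_
      rw [cov]
      split_ifs with hc
      · rcases hc with ⟨hc1, hc2⟩
        rcases eq_or_ne (i + β - i') β with he | he
        · rw [he, hpβ]
        · exact le_trans (hpm _ he) hmn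
      · exact Nat.zero_le _
    have hlo : n ≤ S.sup fun i' => cov p i' (i + β) := by
      have : cov p i (i + β) = n := by
        rw [cov, if_pos ⟨by omega, by omega⟩, Nat.add_sub_cancel_left, hpβ]
      calc n = cov p i (i + β) := this.symm
        _ ≤ _ := Finset.le_sup (f := fun i' => cov p i' (i + β)) hi
    rw [prof]
    omega
  have h2 : ∀ t ∈ A, prof q S t = n := by
    intro t ht
    obtain ⟨i, hi, rfl⟩ := Finset.mem_image.mp ht
    have hup : (S.sup fun i' => cov q i' (i + α)) ≤ n := by
      refine Finset.sup_le fun i' _ => ?_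
      rw [cov]
      split_ifs with hc
      · rcases eq_or_ne (i + α - i') α with he | he
        · rw [he, hqα]
        · exact le_trans (hqm _ he) hmn
      · exact Nat.zero_le _
    have hlo : n ≤ S.sup fun i' => cov q i' (i + α) := by
      have : cov q i (i + α) = n := by
        rw [cov, if_pos ⟨by omega, by rw [hlen]; omega⟩, Nat.add_sub_cancel_left, hqα]
      calc n = cov q i (i + α) := this.symm
        _ ≤ _ := Finset.le_sup (f := fun i' => cov q i' (i + α)) hi
    rw [prof]
    omega
  have h3 : ∀ t ∈ A, t ∉ B → prof p S t = m := by
    intro t ht htB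
    obtain ⟨i, hi, rfl⟩ := Finset.mem_image.mp ht
    have hup : (S.sup fun i' => cov p i' (i + α)) ≤ m := by
      refine Finset.sup_le fun i' hi' => ?_
      rw [cov]
      split_ifs with hc
      · refine hpm _ fun he => htB ?_
        rcases hc with ⟨hc1, hc2⟩
        exact Finset.mem_image.mpr ⟨i', hi', by omega⟩
      · exact Nat.zero_le _
    have hlo : m ≤ S.sup fun i' => cov p i' (i + α) := by
      have : cov p i (i + α) = m := by
        rw [cov, if_pos ⟨by omega, by omega⟩, Nat.add_sub_cancel_left, hpα]
      calc m = cov p i (i + α) := this.symm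
        _ ≤ _ := Finset.le_sup (f := fun i' => cov p i' (i + α)) hi
    rw [prof]
    omega
  have h4 : ∀ t ∈ B, t ∉ A → prof q S t = m := by
    intro t ht htA
    obtain ⟨i, hi, rfl⟩ := Finset.mem_image.mp ht
    have hup : (S.sup fun i' => cov q i' (i + β)) ≤ m := by
      refine Finset.sup_le fun i' hi' => ?_
      rw [cov]
      split_ifs with hc
      · refine hqm _ fun he => htA ?_
        rcases hc with ⟨hc1, hc2⟩
        exact Finset.mem_image.mpr ⟨i', hi', by omega⟩
      · exact Nat.zero_le _
    have hlo : m ≤ S.sup fun i' => cov q i' (i + β) := by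
      have : cov q i (i + β) = m := by
        rw [cov, if_pos ⟨by omega, by rw [hlen]; omega⟩, Nat.add_sub_cancel_left, hqβ]
      calc m = cov q i (i + β) := this.symm
        _ ≤ _ := Finset.le_sup (f := fun i' => cov q i' (i + β)) hi
    rw [prof]
    omega
  have h5 : ∀ t, t ∉ A → t ∉ B → prof p S t = prof q S t := by
    intro t htA htB
    rw [prof, prof]
    congr 1
    refine Finset.sup_congr rfl fun i hi => ?_
    rw [cov, cov, hlen]
    split_ifs with hc
    · refine hagree _ (fun he => htA ?_) fun he => htB ?_
      · exact Finset.mem_image.mpr ⟨i, hi, by omega⟩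
      · exact Finset.mem_image.mpr ⟨i, hi, by omega⟩
    · rfl
  -- cardinalities
  have hcA : A.card = S.card := Finset.card_image_of_injective _ (add_left_injective α)
  have hcB : B.card = S.card := Finset.card_image_of_injective _ (add_left_injective β)
  have hcd : (A \ B).card = (B \ A).card := by
    have := Finset.card_sdiff_add_card_inter A B
    have := Finset.card_sdiff_add_card_inter B A
    rw [Finset.inter_comm] at this
    omega
  -- range membership
  have hsub : A ∪ B ⊆ Finset.range N := by
    intro t ht
    rcases Finset.mem_union.mp ht with ht | ht <;>
      obtain ⟨i, hi, rfl⟩ := Finset.mem_image.mp ht <;>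
      · have := hS i hi
        exact Finset.mem_range.mpr (by omega)
  -- pass to ℤ
  have key : ∑ t ∈ Finset.range N, ((prof p S t : ℤ) - (prof q S t : ℤ)) = 0 := by
    have hzero : ∀ t ∈ Finset.range N, t ∉ (A \ B) ∪ (B \ A) →
        ((prof p S t : ℤ) - (prof q S t : ℤ)) = 0 := by
      intro t _ ht
      rw [Finset.mem_union, Finset.mem_sdiff, Finset.mem_sdiff] at ht
      push_neg at ht
      by_cases htA : t ∈ A
      · have htB : t ∈ B := ht.1 htA
        rw [h1 t htB, h2 t htA]
        ring
      · by_cases htB : t ∈ B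
        · have : t ∈ A := ht.2 htB
          exact absurd this htA
        · rw [h5 t htA htB]
          ring
    rw [← Finset.sum_subset (fun t ht => hsub (by
        rcases Finset.mem_union.mp ht with h | h
        · exact Finset.mem_union_left _ (Finset.mem_sdiff.mp h).1
        · exact Finset.mem_union_right _ (Finset.mem_sdiff.mp h).1)) hzero]
    rw [Finset.sum_union disjoint_sdiff_sdiff]
    have e1 : ∑ t ∈ A \ B, ((prof p S t : ℤ) - (prof q S t : ℤ)) =
        (A \ B).card * ((m : ℤ) - n) := by
      have he : ∀ t ∈ A \ B, ((prof p S t : ℤ) - (prof q S t : ℤ)) = (m : ℤ) - n := by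
        intro t ht
        rw [Finset.mem_sdiff] at ht
        rw [h3 t ht.1 ht.2, h2 t ht.1]
      rw [Finset.sum_congr rfl he, Finset.sum_const, nsmul_eq_mul]
    have e2 : ∑ t ∈ B \ A, ((prof p S t : ℤ) - (prof q S t : ℤ)) =
        (B \ A).card * ((n : ℤ) - m) := by
      have he : ∀ t ∈ B \ A, ((prof p S t : ℤ) - (prof q S t : ℤ)) = (n : ℤ) - m := by
        intro t ht
        rw [Finset.mem_sdiff] at ht
        rw [h1 t ht.1, h4 t ht.1 ht.2]
      rw [Finset.sum_congr rfl he, Finset.sum_const, nsmul_eq_mul]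
    rw [e1, e2, hcd]
    ring
  rw [Finset.sum_sub_distrib] at key
  exact_mod_cast sub_eq_zero.mp key

end Part5

namespace Part6
open WilfAux Part2 Part3 Part4 Part5

lemma getD_le {m : ℕ} (l : List ℕ) (hl : ∀ x ∈ l, x ≤ m) (j : ℕ) : l.getD j 0 ≤ m := by
  rcases Nat.lt_or_ge j l.length with h | h
  · rw [List.getD_eq_getElem _ _ h]
    exact hl _ (l.getElem_mem h)
  · rw [List.getD_eq_default _ _ h]
    exact Nat.zero_le m

lemma getD_pattern (u v w : List ℕ) (a b j : ℕ) :
    (u ++ [a] ++ v ++ [b] ++ w).getD j 0 =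
      if j < u.length then u.getD j 0
      else if j = u.length then a
      else if j < u.length + v.length + 1 then v.getD (j - u.length - 1) 0
      else if j = u.length + v.length + 1 then b
      else w.getD (j - u.length - v.length - 2) 0 := by
  rcases Nat.lt_or_ge j (u.length + v.length + 2) with hj | hj
  · rcases Nat.lt_or_ge j u.length with h1 | h1
    · rw [List.getD_append _ _ _ _ (by simp; omega),
        List.getD_append _ _ _ _ (by simp; omega),
        List.getD_append _ _ _ _ (by simp; omega),
        List.getD_append _ _ _ _ (by simpa using h1), if_pos h1]
    · rcases Nat.eq_or_lt_of_le h1 with h2 | h2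
      · rw [List.getD_append _ _ _ _ (by simp; omega),
          List.getD_append _ _ _ _ (by simp; omega),
          List.getD_append _ _ _ _ (by simp; omega),
          List.getD_append_right _ _ _ _ (by simpa using h1)]
        rw [if_neg (by omega), if_pos h2.symm]
        simp [← h2]
      · rcases Nat.lt_or_ge j (u.length + v.length + 1) with h3 | h3
        · rw [List.getD_append _ _ _ _ (by simp; omega),
            List.getD_append _ _ _ _ (by simp; omega),
            List.getD_append_right _ _ _ _ (by simp; omega)]
          rw [if_neg (by omega), if_neg (by omega), if_pos h3]
          simp only [List.length_append, List.length_cons, List.length_nil]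
          congr 1
        · -- j = u.length + v.length + 1
          have h4 : j = u.length + v.length + 1 := by omega
          rw [List.getD_append _ _ _ _ (by simp; omega),
            List.getD_append_right _ _ _ _ (by simp; omega)]
          rw [if_neg (by omega), if_neg (by omega), if_neg (by omega), if_pos h4]
          have hz : j - (u ++ [a] ++ v).length = 0 := by simp; omega
          rw [hz]
          rfl
  · rw [List.getD_append_right _ _ _ _ (by simp; omega)]
    rw [if_neg (by omega), if_neg (by omega), if_neg (by omega), if_neg (by omega)]
    congr 1
    simp
    omega

end Part6

namespace Part7
open WilfAux Part2 Part3 Part4 Part5 Part6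

theorem main (m n : ℕ) (hm : 1 ≤ m) (hmn : m ≤ n)
    (u v w : List ℕ)
    (hu : ∀ x ∈ u, 1 ≤ x ∧ x ≤ m) (hv : ∀ x ∈ v, 1 ≤ x ∧ x ≤ m)
    (hw : ∀ x ∈ w, 1 ≤ x ∧ x ≤ m) :
    WilfEquiv (u ++ [m] ++ v ++ [n] ++ w) (u ++ [n] ++ v ++ [m] ++ w) := by
  intro N M
  classical
  have hlenp : (u ++ [m] ++ v ++ [n] ++ w).length = u.length + v.length + w.length + 2 := by
    simp
    omega
  have hlenq : (u ++ [n] ++ v ++ [m] ++ w).length = (u ++ [m] ++ v ++ [n] ++ w).length := by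
    simp
  have hL : 1 ≤ (u ++ [m] ++ v ++ [n] ++ w).length := by omega
  have hpα : (u ++ [m] ++ v ++ [n] ++ w).getD u.length 0 = m := by
    rw [getD_pattern, if_neg (lt_irrefl _), if_pos rfl]
  have hpβ : (u ++ [m] ++ v ++ [n] ++ w).getD (u.length + v.length + 1) 0 = n := by
    rw [getD_pattern, if_neg (by omega), if_neg (by omega), if_neg (by omega), if_pos rfl]
  have hqα : (u ++ [n] ++ v ++ [m] ++ w).getD u.length 0 = n := by
    rw [getD_pattern, if_neg (lt_irrefl _), if_pos rfl]
  have hqβ : (u ++ [n] ++ v ++ [m] ++ w).getD (u.length + v.length + 1) 0 = m := by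
    rw [getD_pattern, if_neg (by omega), if_neg (by omega), if_neg (by omega), if_pos rfl]
  have hagree : ∀ j, j ≠ u.length → j ≠ u.length + v.length + 1 →
      (u ++ [m] ++ v ++ [n] ++ w).getD j 0 = (u ++ [n] ++ v ++ [m] ++ w).getD j 0 := by
    intro j h1 h2
    rw [getD_pattern, getD_pattern]
    split_ifs <;> first | rfl | omega
  have hpm : ∀ j, j ≠ u.length + v.length + 1 → (u ++ [m] ++ v ++ [n] ++ w).getD j 0 ≤ m := by
    intro j hj
    rw [getD_pattern]
    split_ifs <;>
      first
        | exact getD_le u (fun x hx => (hu x hx).2) _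
        | exact getD_le v (fun x hx => (hv x hx).2) _
        | exact getD_le w (fun x hx => (hw x hx).2) _
        | omega
  have hqm : ∀ j, j ≠ u.length → (u ++ [n] ++ v ++ [m] ++ w).getD j 0 ≤ m := by
    intro j hj
    rw [getD_pattern]
    split_ifs <;>
      first
        | exact getD_le u (fun x hx => (hu x hx).2) _
        | exact getD_le v (fun x hx => (hv x hx).2) _
        | exact getD_le w (fun x hx => (hw x hx).2) _
        | omega
  rw [ncard_eq_cnt, ncard_eq_cnt]
  have hZ : ((cnt N M (Avoids (u ++ [m] ++ v ++ [n] ++ w))).card : ℤ) =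
      ((cnt N M (Avoids (u ++ [n] ++ v ++ [m] ++ w))).card : ℤ) := by
    rw [inclusion_exclusion N M _ hL, inclusion_exclusion N M _ (hlenq ▸ hL)]
    refine Finset.sum_congr rfl fun S _ => ?_
    have hc : (cnt N M fun x => ∀ i ∈ S, emb0 (u ++ [m] ++ v ++ [n] ++ w) x i).card
        = (cnt N M fun x => ∀ i ∈ S, emb0 (u ++ [n] ++ v ++ [m] ++ w) x i).card := by
      by_cases hval : ∀ i ∈ S, i + (u ++ [m] ++ v ++ [n] ++ w).length ≤ N
      · refine card_cnt_eq N M _ _ S hval (fun i hi => by rw [hlenq]; exact hval i hi) ?_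
        exact prof_sum_eq N _ _ m n u.length (u.length + v.length + 1) hm hmn (by omega)
          (by omega) hlenq hagree hpα hpβ hqα hqβ hpm hqm S hval
      · push_neg at hval
        obtain ⟨i, hi, hbig⟩ := hval
        have h0 : ∀ r : List ℕ, r.length = (u ++ [m] ++ v ++ [n] ++ w).length →
            (cnt N M fun x => ∀ i' ∈ S, emb0 r x i') = ∅ := by
          intro r hr
          rw [Finset.eq_empty_iff_forall_notMem]
          intro f hf
          rw [mem_cnt] at hf
          have hthis := (hf.2.2 i hi).1
          rw [hr] at hthis
          simp only [List.length_ofFn] at hthis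
          omega
        rw [h0 _ rfl, h0 _ hlenq]
    rw [hc]
  exact_mod_cast hZ

end Part7


/-- For `n ≥ m ≥ 1` and words `u, v, w` with letters in
`{1, …, m}`, the words `u·m·v·n·w` and `u·n·v·m·w` are Wilf equivalent. -/
theorem umvnw_wilfEquiv_unvmw (m n : ℕ) (hm : 1 ≤ m) (hmn : m ≤ n)
    (u v w : List ℕ)
    (hu : ∀ x ∈ u, 1 ≤ x ∧ x ≤ m) (hv : ∀ x ∈ v, 1 ≤ x ∧ x ≤ m)
    (hw : ∀ x ∈ w, 1 ≤ x ∧ x ≤ m) :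
    WilfEquiv (u ++ [m] ++ v ++ [n] ++ w) (u ++ [n] ++ v ++ [m] ++ w) := by
  exact Part7.main m n hm hmn u v w hu hv hw
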